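/- Set μ := E( (E u₁)·(E u₂) ) = Σ_{i=1}^n u_{1i}·u_{2i}·( Σ_{l=1}^n σ_{li}² ). Then E( (E u₁)·(E u₂) )² ≤ 5·n·m₄ + μ². In particular, if E is regular (Σ_{l=1}^n σ_{li}² is the same for every i), then μ = 0 and E( (E u₁)·(E u₂) )² ≤ 5·n·m₄. -/

import Mathlib

open Matrix MeasureTheory ProbabilityTheory
open scoped ENNReal

section Aux

variable {n : ℕ} {Ω : Type} [MeasurableSpace Ω] {P : Measure Ω} [IsProbabilityMeasure P]
  {E : Ω → Matrix (Fin n) (Fin n) ℝ}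

private lemma ennreal_half : (2:ℝ≥0∞)⁻¹ = 4⁻¹ + 4⁻¹ := by
  rw [show (4:ℝ≥0∞) = 2 * 2 by norm_num, ENNReal.mul_inv (by norm_num) (by norm_num), ← two_mul,
    ← mul_assoc, ENNReal.mul_inv_cancel (by norm_num) (by norm_num), one_mul]

private lemma ennreal_one : (1:ℝ≥0∞) = 2⁻¹ + 2⁻¹ := by
  rw [← two_mul, ENNReal.mul_inv_cancel (by norm_num) (by norm_num)]

/-- products of two L⁴ entries are in L². -/
private lemma mem2 (hL4 : ∀ i j, MemLp (fun ω => E ω i j) 4 P) (k a b : Fin n) :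
    MemLp (fun ω => E ω k a * E ω k b) 2 P := by
  exact (hL4 k b).smul (r := 2) (φ := fun ω => E ω k a) (hL4 k a)
    (hpqr := ⟨ennreal_half.symm⟩)

private lemma int2 (hL4 : ∀ i j, MemLp (fun ω => E ω i j) 4 P) (k a b : Fin n) :
    Integrable (fun ω => E ω k a * E ω k b) P :=
  (mem2 hL4 k a b).integrable one_le_two

/-- products of four L⁴ entries are integrable. -/
private lemma int4 (hL4 : ∀ i j, MemLp (fun ω => E ω i j) 4 P) (k a b c d : Fin n) :
    Integrable (fun ω => E ω k a * E ω k b * (E ω k c * E ω k d)) P := by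
  refine memLp_one_iff_integrable.mp ?_
  exact (mem2 hL4 k c d).smul (r := 1) (φ := fun ω => E ω k a * E ω k b) (mem2 hL4 k a b)
    (hpqr := ⟨by rw [inv_one]; exact ennreal_one.symm⟩)

/-- the zero lemma: a lone factor of zero mean, independent of the rest. -/
private lemma zero4 (hmeas : ∀ i j, Measurable (fun ω => E ω i j))
    (hindep : iIndepFun
      (fun (q : Fin n × Fin n) ω => E ω q.1 q.2) P)
    (hmean : ∀ i j, ∫ ω, E ω i j ∂P = 0)
    (k t x y z : Fin n) (htx : t ≠ x) (hty : t ≠ y) (htz : t ≠ z) :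
    ∫ ω, E ω k t * (E ω k x * E ω k y * E ω k z) ∂P = 0 := by
  classical
  have hdisj : Disjoint ({(k,t)} : Finset (Fin n × Fin n)) {(k,x),(k,y),(k,z)} := by
    simp only [Finset.disjoint_left, Finset.mem_singleton, Finset.mem_insert]
    rintro a rfl
    simp [Prod.ext_iff, htx, hty, htz]
  have hbase := hindep.indepFun_finset {(k,t)} {(k,x),(k,y),(k,z)} hdisj
    (fun q => hmeas q.1 q.2)
  have hmemt : (k,t) ∈ ({(k,t)} : Finset (Fin n × Fin n)) := by simp
  have hmx : (k,x) ∈ ({(k,x),(k,y),(k,z)} : Finset (Fin n × Fin n)) := by simp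
  have hmy : (k,y) ∈ ({(k,x),(k,y),(k,z)} : Finset (Fin n × Fin n)) := by simp
  have hmz : (k,z) ∈ ({(k,x),(k,y),(k,z)} : Finset (Fin n × Fin n)) := by simp
  have hInd : IndepFun (fun ω => E ω k t)
      (fun ω => E ω k x * E ω k y * E ω k z) P := by
    have := hbase.comp (φ := fun v => v ⟨(k,t), hmemt⟩)
      (ψ := fun v => v ⟨(k,x), hmx⟩ * v ⟨(k,y), hmy⟩ * v ⟨(k,z), hmz⟩)
      (measurable_pi_apply _ : Measurable fun (v : ((q : ({(k,t)} : Finset (Fin n × Fin n))) → ℝ)) => v ⟨(k,t), hmemt⟩)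
      (by
        have m1 : Measurable fun (v : ((q : ({(k,x),(k,y),(k,z)} : Finset (Fin n × Fin n))) → ℝ)) => v ⟨(k,x), hmx⟩ := measurable_pi_apply _
        have m2 : Measurable fun (v : ((q : ({(k,x),(k,y),(k,z)} : Finset (Fin n × Fin n))) → ℝ)) => v ⟨(k,y), hmy⟩ := measurable_pi_apply _
        have m3 : Measurable fun (v : ((q : ({(k,x),(k,y),(k,z)} : Finset (Fin n × Fin n))) → ℝ)) => v ⟨(k,z), hmz⟩ := measurable_pi_apply _
        exact (m1.mul m2).mul m3)
    exact this
  rw [hInd.integral_fun_mul_eq_mul_integral (hmeas k t).aestronglyMeasurable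
    (((hmeas k x).mul (hmeas k y)).mul (hmeas k z)).aestronglyMeasurable,
    hmean k t, zero_mul]

/-- the pair lemma: squares of two distinct entries are independent. -/
private lemma pair2 (hmeas : ∀ i j, Measurable (fun ω => E ω i j))
    (hindep : iIndepFun
      (fun (q : Fin n × Fin n) ω => E ω q.1 q.2) P)
    (k s t : Fin n) (hst : s ≠ t) :
    ∫ ω, (E ω k s)^2 * (E ω k t)^2 ∂P = (∫ ω, (E ω k s)^2 ∂P) * ∫ ω, (E ω k t)^2 ∂P := by
  have h1 : IndepFun (fun ω => E ω k s) (fun ω => E ω k t) P :=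
    hindep.indepFun (by simp [Prod.ext_iff, hst] : ((k,s) : Fin n × Fin n) ≠ (k,t))
  have h2 : IndepFun (fun ω => (E ω k s)^2) (fun ω => (E ω k t)^2) P :=
    h1.comp (φ := fun x : ℝ => x^2) (ψ := fun x : ℝ => x^2) (by fun_prop) (by fun_prop)
  exact h2.integral_fun_mul_eq_mul_integral ((hmeas k s).pow_const 2).aestronglyMeasurable
    ((hmeas k t).pow_const 2).aestronglyMeasurable

/-- Value of fourth-order mixed moments within a row. -/
private lemma Mval (hmeas : ∀ i j, Measurable (fun ω => E ω i j))
    (hindep : iIndepFun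
      (fun (q : Fin n × Fin n) ω => E ω q.1 q.2) P)
    (hmean : ∀ i j, ∫ ω, E ω i j ∂P = 0)
    (k a b c d : Fin n) :
    ∫ ω, E ω k a * E ω k b * (E ω k c * E ω k d) ∂P =
      (if a = b then 1 else 0) * (if c = d then 1 else 0) *
        ((∫ ω, (E ω k a)^2 ∂P) * ∫ ω, (E ω k c)^2 ∂P)
      + (if a = c then 1 else 0) * (if b = d then 1 else 0) *
        ((∫ ω, (E ω k a)^2 ∂P) * ∫ ω, (E ω k b)^2 ∂P)
      + (if a = d then 1 else 0) * (if b = c then 1 else 0) *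
        ((∫ ω, (E ω k a)^2 ∂P) * ∫ ω, (E ω k b)^2 ∂P)
      + (if a = b ∧ a = c ∧ a = d then
          (∫ ω, (E ω k a)^4 ∂P) - 3 * (∫ ω, (E ω k a)^2 ∂P)^2 else 0) := by
  by_cases hab : a = b
  · subst hab
    by_cases hcd : c = d
    · subst hcd
      by_cases hac : a = c
      · subst hac
        have h1 : ∫ ω, E ω k a * E ω k a * (E ω k a * E ω k a) ∂P
            = ∫ ω, (E ω k a)^4 ∂P := by congr 1; funext ω; ring
        rw [h1]; simp; ring
      · have h1 : ∫ ω, E ω k a * E ω k a * (E ω k c * E ω k c) ∂P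
            = ∫ ω, (E ω k a)^2 * (E ω k c)^2 ∂P := by congr 1; funext ω; ring
        rw [h1, pair2 hmeas hindep k a c hac]
        have hca : ¬ (c = a) := fun h => hac h.symm
        simp [hac, hca]
    · -- a = b, c ≠ d : zero
      have hrhs : (if (a:Fin n) = a then (1:ℝ) else 0) * (if c = d then 1 else 0) *
            ((∫ ω, (E ω k a)^2 ∂P) * ∫ ω, (E ω k c)^2 ∂P)
          + (if a = c then 1 else 0) * (if a = d then 1 else 0) *
            ((∫ ω, (E ω k a)^2 ∂P) * ∫ ω, (E ω k a)^2 ∂P)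
          + (if a = d then 1 else 0) * (if a = c then 1 else 0) *
            ((∫ ω, (E ω k a)^2 ∂P) * ∫ ω, (E ω k a)^2 ∂P)
          + (if a = a ∧ a = c ∧ a = d then
              (∫ ω, (E ω k a)^4 ∂P) - 3 * (∫ ω, (E ω k a)^2 ∂P)^2 else 0) = 0 := by
        by_cases hac : a = c
        · have had : ¬ a = d := fun h => hcd (hac ▸ h ▸ rfl)
          simp [hcd, hac, had]
        · simp [hcd, hac]
      rw [hrhs]
      by_cases hac : a = c
      · subst hac
        have hda : d ≠ a := fun h => hcd h.symm
        have h1 : ∫ ω, E ω k a * E ω k a * (E ω k a * E ω k d) ∂P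
            = ∫ ω, E ω k d * (E ω k a * E ω k a * E ω k a) ∂P := by congr 1; funext ω; ring
        rw [h1, zero4 hmeas hindep hmean k d a a a hda hda hda]
      · by_cases had : a = d
        · subst had
          have hca : c ≠ a := fun h => hac h.symm
          have h1 : ∫ ω, E ω k a * E ω k a * (E ω k c * E ω k a) ∂P
              = ∫ ω, E ω k c * (E ω k a * E ω k a * E ω k a) ∂P := by congr 1; funext ω; ring
          rw [h1, zero4 hmeas hindep hmean k c a a a hca hca hca]
        · have hca : c ≠ a := fun h => hac h.symm
          have h1 : ∫ ω, E ω k a * E ω k a * (E ω k c * E ω k d) ∂P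
              = ∫ ω, E ω k c * (E ω k a * E ω k a * E ω k d) ∂P := by congr 1; funext ω; ring
          rw [h1, zero4 hmeas hindep hmean k c a a d hca hca hcd]
  · -- a ≠ b
    by_cases hcd : c = d
    · subst hcd
      have hrhs : (if a = b then (1:ℝ) else 0) * (if c = c then 1 else 0) *
            ((∫ ω, (E ω k a)^2 ∂P) * ∫ ω, (E ω k c)^2 ∂P)
          + (if a = c then 1 else 0) * (if b = c then 1 else 0) *
            ((∫ ω, (E ω k a)^2 ∂P) * ∫ ω, (E ω k b)^2 ∂P)
          + (if a = c then 1 else 0) * (if b = c then 1 else 0) *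
            ((∫ ω, (E ω k a)^2 ∂P) * ∫ ω, (E ω k b)^2 ∂P)
          + (if a = b ∧ a = c ∧ a = c then
              (∫ ω, (E ω k a)^4 ∂P) - 3 * (∫ ω, (E ω k a)^2 ∂P)^2 else 0) = 0 := by
        by_cases hac : a = c
        · have hbc : ¬ b = c := fun h => hab (hac.trans h.symm)
          have hcb : ¬ c = b := fun h => hbc h.symm
          simp [hab, hac, hbc, hcb]
        · simp [hab, hac]
      rw [hrhs]
      by_cases hca : c = a
      · have hba : b ≠ a := fun h => hab h.symm
        have h1 : ∫ ω, E ω k a * E ω k b * (E ω k c * E ω k c) ∂P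
            = ∫ ω, E ω k b * (E ω k a * E ω k a * E ω k a) ∂P := by
          congr 1; funext ω; rw [hca]; ring
        rw [h1, zero4 hmeas hindep hmean k b a a a hba hba hba]
      · by_cases hcb : c = b
        · have hac : a ≠ c := fun h => hca h.symm
          have h1 : ∫ ω, E ω k a * E ω k b * (E ω k c * E ω k c) ∂P
              = ∫ ω, E ω k a * (E ω k c * E ω k c * E ω k c) ∂P := by
            congr 1; funext ω; rw [hcb]; ring
          rw [h1, zero4 hmeas hindep hmean k a c c c hac hac hac]
        · have hac : a ≠ c := fun h => hca h.symm
          have h1 : ∫ ω, E ω k a * E ω k b * (E ω k c * E ω k c) ∂P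
              = ∫ ω, E ω k a * (E ω k b * E ω k c * E ω k c) ∂P := by congr 1; funext ω; ring
          rw [h1, zero4 hmeas hindep hmean k a b c c hab hac hac]
    · -- a ≠ b, c ≠ d
      by_cases hac : a = c
      · subst hac
        by_cases hbd : b = d
        · subst hbd
          have h1 : ∫ ω, E ω k a * E ω k b * (E ω k a * E ω k b) ∂P
              = ∫ ω, (E ω k a)^2 * (E ω k b)^2 ∂P := by congr 1; funext ω; ring
          rw [h1, pair2 hmeas hindep k a b hab]
          have hbc : ¬ b = a := fun h => hab h.symm
          simp [hab, hcd, hbc]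
        · -- b appears exactly once
          have hba : b ≠ a := fun h => hab h.symm
          have h1 : ∫ ω, E ω k a * E ω k b * (E ω k a * E ω k d) ∂P
              = ∫ ω, E ω k b * (E ω k a * E ω k a * E ω k d) ∂P := by congr 1; funext ω; ring
          rw [h1, zero4 hmeas hindep hmean k b a a d hba hba hbd]
          have had : ¬ a = d := hcd
          simp [hab, hcd, hbd, hba]
      · by_cases had : a = d
        · by_cases hbc : b = c
          · subst had; subst hbc
            have h1 : ∫ ω, E ω k a * E ω k b * (E ω k b * E ω k a) ∂P
                = ∫ ω, (E ω k a)^2 * (E ω k b)^2 ∂P := by congr 1; funext ω; ring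
            rw [h1, pair2 hmeas hindep k a b hab]
            have hba : ¬ b = a := fun h => hab h.symm
            simp [hab, hac, hba]
          · -- b appears exactly once
            subst had
            have hba : b ≠ a := fun h => hab h.symm
            have h1 : ∫ ω, E ω k a * E ω k b * (E ω k c * E ω k a) ∂P
                = ∫ ω, E ω k b * (E ω k a * E ω k c * E ω k a) ∂P := by congr 1; funext ω; ring
            rw [h1, zero4 hmeas hindep hmean k b a c a hba hbc hba]
            simp [hab, hac, hbc]
        · -- a appears exactly once
          have h1 : ∫ ω, E ω k a * E ω k b * (E ω k c * E ω k d) ∂P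
              = ∫ ω, E ω k a * (E ω k b * E ω k c * E ω k d) ∂P := by congr 1; funext ω; ring
          rw [h1, zero4 hmeas hindep hmean k a b c d hab hac had]
          simp [hab, hac, had]

end Aux

set_option maxHeartbeats 1000000 in
/-- Lemma 7.4 / Appendix A.1: second-moment bound for `(E u₁)·(E u₂)`. -/
theorem second_moment_Eu1_Eu2_bound
    {n : ℕ} (hn : 0 < n)
    {Ω : Type} [MeasurableSpace Ω] (P : Measure Ω) [IsProbabilityMeasure P]
    (E : Ω → Matrix (Fin n) (Fin n) ℝ)
    (hmeas : ∀ i j, Measurable (fun ω => E ω i j))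
    -- all entries are independent :
    (hindep : iIndepFun
      (fun (q : Fin n × Fin n) ω => E ω q.1 q.2) P)
    -- mean zero, finite fourth moments :
    (hmean : ∀ i j, ∫ ω, E ω i j ∂P = 0)
    (hL4 : ∀ i j, MemLp (fun ω => E ω i j) 4 P)
    (m4 : ℝ)
    (hm4 : IsGreatest {t | ∃ i : Fin n, t = (1 / n) *
      max (∑ j, ∫ ω, (E ω i j) ^ 4 ∂P) (∑ j, ∫ ω, (E ω j i) ^ 4 ∂P)} m4)
    (u1 u2 : Fin n → ℝ)
    (hu1 : u1 ⬝ᵥ u1 = 1) (hu2 : u2 ⬝ᵥ u2 = 1) (hu12 : u1 ⬝ᵥ u2 = 0) :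
    (∫ ω, (E ω *ᵥ u1) ⬝ᵥ (E ω *ᵥ u2) ∂P =
        ∑ i, u1 i * u2 i * (∑ l, ∫ ω, (E ω l i) ^ 2 ∂P)) ∧
    (∫ ω, ((E ω *ᵥ u1) ⬝ᵥ (E ω *ᵥ u2)) ^ 2 ∂P ≤
        5 * n * m4 + (∫ ω, (E ω *ᵥ u1) ⬝ᵥ (E ω *ᵥ u2) ∂P) ^ 2) ∧
    ((∀ i i' : Fin n, (∑ l, ∫ ω, (E ω l i) ^ 2 ∂P) =
        ∑ l, ∫ ω, (E ω l i') ^ 2 ∂P) →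
      (∫ ω, (E ω *ᵥ u1) ⬝ᵥ (E ω *ᵥ u2) ∂P = 0 ∧
        ∫ ω, ((E ω *ᵥ u1) ⬝ᵥ (E ω *ᵥ u2)) ^ 2 ∂P ≤ 5 * n * m4)) := by
  classical
  have hgt0 : (0:ℝ) < n := by exact_mod_cast hn
  -- basic positivity facts
  have hκnn : ∀ k i : Fin n, (0:ℝ) ≤ ∫ ω, (E ω k i)^4 ∂P :=
    fun k i => integral_nonneg (fun ω => by positivity)
  have hm4nn : 0 ≤ m4 := by
    obtain ⟨i0, hi0⟩ := hm4.1
    rw [hi0]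
    have h1 : (0:ℝ) ≤ ∑ j, ∫ ω, (E ω i0 j)^4 ∂P := Finset.sum_nonneg fun j _ => hκnn i0 j
    have h2 : (0:ℝ) ≤ max (∑ j, ∫ ω, (E ω i0 j)^4 ∂P) (∑ j, ∫ ω, (E ω j i0)^4 ∂P) :=
      le_trans h1 (le_max_left _ _)
    positivity
  have hcol : ∀ i : Fin n, (∑ k, ∫ ω, (E ω k i)^4 ∂P) ≤ n * m4 := by
    intro i
    have hmem : (1 / (n:ℝ)) *
        max (∑ j, ∫ ω, (E ω i j) ^ 4 ∂P) (∑ j, ∫ ω, (E ω j i) ^ 4 ∂P) ≤ m4 :=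
      hm4.2 ⟨i, rfl⟩
    have h1 : (∑ k, ∫ ω, (E ω k i)^4 ∂P) ≤
        max (∑ j, ∫ ω, (E ω i j) ^ 4 ∂P) (∑ j, ∫ ω, (E ω j i) ^ 4 ∂P) := le_max_right _ _
    have h2 : max (∑ j, ∫ ω, (E ω i j) ^ 4 ∂P) (∑ j, ∫ ω, (E ω j i) ^ 4 ∂P) ≤ n * m4 := by
      have := mul_le_mul_of_nonneg_left hmem (le_of_lt hgt0)
      calc max (∑ j, ∫ ω, (E ω i j) ^ 4 ∂P) (∑ j, ∫ ω, (E ω j i) ^ 4 ∂P)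
          = (n:ℝ) * ((1 / (n:ℝ)) * max (∑ j, ∫ ω, (E ω i j) ^ 4 ∂P)
              (∑ j, ∫ ω, (E ω j i) ^ 4 ∂P)) := by field_simp
        _ ≤ n * m4 := this
    exact le_trans h1 h2
  -- the diagonal variance inequality : (∫ ξ²)² ≤ ∫ ξ⁴
  have hvar : ∀ k i : Fin n, (∫ ω, (E ω k i)^2 ∂P)^2 ≤ ∫ ω, (E ω k i)^4 ∂P := by
    intro k i
    have h2mem' : MemLp (fun ω => (E ω k i)^2) 2 P :=
      MemLp.ae_eq (Filter.EventuallyEq.of_eq (funext fun ω => (pow_two (E ω k i)).symm))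
        (mem2 hL4 k i i)
    have hvnn := variance_nonneg (fun ω => (E ω k i)^2) P
    rw [variance_eq_sub h2mem'] at hvnn
    have h4 : P[(fun ω => (E ω k i)^2) ^ 2] = ∫ ω, (E ω k i)^4 ∂P := by
      congr 1; funext ω; simp [Pi.pow_apply]; ring
    have h2 : P[(fun ω => (E ω k i)^2)] = ∫ ω, (E ω k i)^2 ∂P := rfl
    rw [h4, h2] at hvnn
    linarith
  -- unit norms
  have hu1sq : ∑ i, (u1 i)^2 = 1 := by
    rw [← hu1]; exact Finset.sum_congr rfl fun i _ => pow_two _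
  have hu2sq : ∑ i, (u2 i)^2 = 1 := by
    rw [← hu2]; exact Finset.sum_congr rfl fun i _ => pow_two _
  have hu2le : ∀ i, (u2 i)^2 ≤ 1 := by
    intro i
    rw [← hu2sq]
    exact Finset.single_le_sum (fun j _ => sq_nonneg (u2 j)) (Finset.mem_univ i)
  -- row bilinear forms
  set X : Fin n → Ω → ℝ :=
    fun k ω => (∑ i, E ω k i * u1 i) * (∑ j, E ω k j * u2 j) with hXdef
  have hSX : ∀ ω, (E ω *ᵥ u1) ⬝ᵥ (E ω *ᵥ u2) = ∑ k, X k ω := by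
    intro ω; simp [dotProduct, mulVec, hXdef]
  have hmeasX : ∀ k, Measurable (X k) := fun k =>
    (Finset.measurable_sum _ fun i _ => (hmeas k i).mul_const _).mul
      (Finset.measurable_sum _ fun j _ => (hmeas k j).mul_const _)
  have hMemX : ∀ k, MemLp (X k) 2 P := by
    intro k
    have hA : MemLp (fun ω => ∑ i, E ω k i * u1 i) 4 P :=
      memLp_finset_sum Finset.univ (fun i _ =>
        MemLp.ae_eq (Filter.EventuallyEq.of_eq (funext fun ω => mul_comm _ _))
          ((hL4 k i).const_mul (u1 i)))
    have hB : MemLp (fun ω => ∑ j, E ω k j * u2 j) 4 P :=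
      memLp_finset_sum Finset.univ (fun j _ =>
        MemLp.ae_eq (Filter.EventuallyEq.of_eq (funext fun ω => mul_comm _ _))
          ((hL4 k j).const_mul (u2 j)))
    exact hB.smul (r := 2) hA (hpqr := ⟨ennreal_half.symm⟩)
  have hIntX : ∀ k, Integrable (X k) P := fun k => (hMemX k).integrable one_le_two
  have hIntXX : ∀ k k', Integrable (fun ω => X k ω * X k' ω) P := by
    intro k k'
    refine memLp_one_iff_integrable.mp ?_
    exact (hMemX k').smul (r := 1) (hMemX k) (hpqr := ⟨by rw [inv_one]; exact ennreal_one.symm⟩)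
  -- second moments of single entries
  have hT : ∀ k i j : Fin n, ∫ ω, E ω k i * E ω k j ∂P =
      if i = j then ∫ ω, (E ω k i)^2 ∂P else 0 := by
    intro k i j
    by_cases h : i = j
    · subst h; rw [if_pos rfl]; congr 1; funext ω; ring
    · rw [if_neg h]
      have hind : IndepFun (fun ω => E ω k i) (fun ω => E ω k j) P :=
        hindep.indepFun (show ((k,i) : Fin n × Fin n) ≠ (k,j) by simp [Prod.ext_iff, h])
      rw [hind.integral_fun_mul_eq_mul_integral (hmeas k i).aestronglyMeasurable
        (hmeas k j).aestronglyMeasurable, hmean k i, zero_mul]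
  -- expectation of one row form
  have hQ : ∀ k, ∫ ω, X k ω ∂P = ∑ i, u1 i * u2 i * ∫ ω, (E ω k i)^2 ∂P := by
    intro k
    have hpt : ∀ ω, X k ω = ∑ i, ∑ j, u1 i * u2 j * (E ω k i * E ω k j) := by
      intro ω
      show (∑ i, E ω k i * u1 i) * (∑ j, E ω k j * u2 j) = _
      rw [Finset.sum_mul_sum]
      exact Finset.sum_congr rfl fun i _ => Finset.sum_congr rfl fun j _ => by ring
    calc ∫ ω, X k ω ∂P
        = ∫ ω, ∑ i, ∑ j, u1 i * u2 j * (E ω k i * E ω k j) ∂P := by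
          congr 1; funext ω; exact hpt ω
      _ = ∑ i, ∑ j, u1 i * u2 j * ∫ ω, E ω k i * E ω k j ∂P := by
          rw [integral_finset_sum _ (fun i _ => integrable_finset_sum _
            (fun j _ => ((int2 hL4 k i j).const_mul _)))]
          refine Finset.sum_congr rfl fun i _ => ?_
          rw [integral_finset_sum _ (fun j _ => (int2 hL4 k i j).const_mul _)]
          exact Finset.sum_congr rfl fun j _ => integral_const_mul _ _
      _ = ∑ i, u1 i * u2 i * ∫ ω, (E ω k i)^2 ∂P := by
          refine Finset.sum_congr rfl fun i _ => ?_
          simp only [hT k i, mul_ite, mul_zero, Finset.sum_ite_eq, Finset.mem_univ, if_true]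
  have hIS : ∫ ω, (E ω *ᵥ u1) ⬝ᵥ (E ω *ᵥ u2) ∂P =
      ∑ k, ∑ i, u1 i * u2 i * ∫ ω, (E ω k i)^2 ∂P := by
    calc ∫ ω, (E ω *ᵥ u1) ⬝ᵥ (E ω *ᵥ u2) ∂P
        = ∫ ω, ∑ k, X k ω ∂P := integral_congr_ae (Filter.EventuallyEq.of_eq (funext hSX))
      _ = ∑ k, ∫ ω, X k ω ∂P := integral_finset_sum _ (fun k _ => hIntX k)
      _ = _ := Finset.sum_congr rfl fun k _ => hQ k
  have part1 : ∫ ω, (E ω *ᵥ u1) ⬝ᵥ (E ω *ᵥ u2) ∂P =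
      ∑ i, u1 i * u2 i * (∑ l, ∫ ω, (E ω l i) ^ 2 ∂P) := by
    rw [hIS, Finset.sum_comm]
    exact Finset.sum_congr rfl fun i _ => (Finset.mul_sum _ _ _).symm
  -- independence of distinct row forms
  have hIndepX : ∀ k k', k ≠ k' → IndepFun (X k) (X k') P := by
    intro k k' hkk'
    have hdisj : Disjoint (({k} ×ˢ Finset.univ : Finset (Fin n × Fin n)))
        ({k'} ×ˢ Finset.univ) := by
      simp only [Finset.disjoint_left, Finset.mem_product, Finset.mem_singleton]
      rintro ⟨a, b⟩ ⟨rfl, -⟩ ⟨h, -⟩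
      exact hkk' h
    have hbase := hindep.indepFun_finset ({k} ×ˢ Finset.univ) ({k'} ×ˢ Finset.univ) hdisj
      (fun q => hmeas q.1 q.2)
    have hmem : ∀ (r : Fin n) (i : Fin n), (r, i) ∈ ({r} ×ˢ Finset.univ : Finset (Fin n × Fin n)) := by
      intro r i; simp
    have hφmeas : ∀ r : Fin n, Measurable (fun (v : ((q : ({r} ×ˢ Finset.univ : Finset (Fin n × Fin n))) → ℝ)) =>
        (∑ i, v ⟨(r,i), hmem r i⟩ * u1 i) * (∑ j, v ⟨(r,j), hmem r j⟩ * u2 j)) := by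
      intro r
      have m : ∀ i : Fin n, Measurable (fun (v : ((q : ({r} ×ˢ Finset.univ : Finset (Fin n × Fin n))) → ℝ)) => v ⟨(r,i), hmem r i⟩) :=
        fun i => measurable_pi_apply _
      exact (Finset.measurable_sum _ fun i _ => (m i).mul_const _).mul
        (Finset.measurable_sum _ fun j _ => (m j).mul_const _)
    exact hbase.comp (hφmeas k) (hφmeas k')
  -- splitting the double sum
  have hS2 : ∫ ω, ((E ω *ᵥ u1) ⬝ᵥ (E ω *ᵥ u2))^2 ∂P =
      ∑ k, ∑ k', ∫ ω, X k ω * X k' ω ∂P := by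
    have hpt : ∀ ω, ((E ω *ᵥ u1) ⬝ᵥ (E ω *ᵥ u2))^2 = ∑ k, ∑ k', X k ω * X k' ω := by
      intro ω; rw [hSX ω, pow_two, Finset.sum_mul_sum]
    rw [integral_congr_ae (Filter.EventuallyEq.of_eq (funext hpt)),
      integral_finset_sum _ (fun k _ => integrable_finset_sum _ (fun k' _ => hIntXX k k'))]
    exact Finset.sum_congr rfl fun k _ => integral_finset_sum _ (fun k' _ => hIntXX k k')
  -- the diagonal fourth-moment computation
  have hdiag : ∀ k, ∫ ω, X k ω * X k ω ∂P =
      2 * (∑ i, u1 i * u2 i * ∫ ω, (E ω k i)^2 ∂P)^2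
      + (∑ i, (u1 i)^2 * ∫ ω, (E ω k i)^2 ∂P) * (∑ i, (u2 i)^2 * ∫ ω, (E ω k i)^2 ∂P)
      + ∑ i, (u1 i)^2 * (u2 i)^2 * ((∫ ω, (E ω k i)^4 ∂P) - 3 * (∫ ω, (E ω k i)^2 ∂P)^2) := by
    intro k
    have hpt : ∀ ω, X k ω * X k ω =
        ∑ i, ∑ i', ∑ j, ∑ j', (u1 i * u2 j * (u1 i' * u2 j')) *
          (E ω k i * E ω k j * (E ω k i' * E ω k j')) := by
      intro ω
      show ((∑ i, E ω k i * u1 i) * ∑ j, E ω k j * u2 j) *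
        ((∑ i, E ω k i * u1 i) * ∑ j, E ω k j * u2 j) = _
      rw [Finset.sum_mul_sum (f := fun i => E ω k i * u1 i) (g := fun j => E ω k j * u2 j),
        Finset.sum_mul_sum]
      refine Finset.sum_congr rfl fun i _ => Finset.sum_congr rfl fun i' _ => ?_
      rw [Finset.sum_mul_sum]
      exact Finset.sum_congr rfl fun j _ => Finset.sum_congr rfl fun j' _ => by ring
    have hint : ∫ ω, X k ω * X k ω ∂P =
        ∑ i, ∑ i', ∑ j, ∑ j', (u1 i * u2 j * (u1 i' * u2 j')) *
          ∫ ω, E ω k i * E ω k j * (E ω k i' * E ω k j') ∂P := by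
      rw [integral_congr_ae (Filter.EventuallyEq.of_eq (funext hpt)),
        integral_finset_sum _ (fun i _ => integrable_finset_sum _ (fun i' _ =>
          integrable_finset_sum _ (fun j _ => integrable_finset_sum _ (fun j' _ =>
            (int4 hL4 k i j i' j').const_mul _))))]
      refine Finset.sum_congr rfl fun i _ => ?_
      rw [integral_finset_sum _ (fun i' _ => integrable_finset_sum _ (fun j _ =>
        integrable_finset_sum _ (fun j' _ => (int4 hL4 k i j i' j').const_mul _)))]
      refine Finset.sum_congr rfl fun i' _ => ?_
      rw [integral_finset_sum _ (fun j _ => integrable_finset_sum _ (fun j' _ =>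
        (int4 hL4 k i j i' j').const_mul _))]
      refine Finset.sum_congr rfl fun j _ => ?_
      rw [integral_finset_sum _ (fun j' _ => (int4 hL4 k i j i' j').const_mul _)]
      exact Finset.sum_congr rfl fun j' _ => integral_const_mul _ _
    rw [hint]
    have hM : ∀ i i' j j' : Fin n,
        (u1 i * u2 j * (u1 i' * u2 j')) * ∫ ω, E ω k i * E ω k j * (E ω k i' * E ω k j') ∂P
        = (u1 i * u2 j * (u1 i' * u2 j')) *
            ((if i = j then (1:ℝ) else 0) * (if i' = j' then 1 else 0) *
              ((∫ ω, (E ω k i)^2 ∂P) * ∫ ω, (E ω k i')^2 ∂P))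
          + (u1 i * u2 j * (u1 i' * u2 j')) *
            ((if i = i' then (1:ℝ) else 0) * (if j = j' then 1 else 0) *
              ((∫ ω, (E ω k i)^2 ∂P) * ∫ ω, (E ω k j)^2 ∂P))
          + (u1 i * u2 j * (u1 i' * u2 j')) *
            ((if i = j' then (1:ℝ) else 0) * (if j = i' then 1 else 0) *
              ((∫ ω, (E ω k i)^2 ∂P) * ∫ ω, (E ω k j)^2 ∂P))
          + (u1 i * u2 j * (u1 i' * u2 j')) *
            (if i = j ∧ i = i' ∧ i = j' then
              (∫ ω, (E ω k i)^4 ∂P) - 3 * (∫ ω, (E ω k i)^2 ∂P)^2 else 0) := by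
      intro i i' j j'
      rw [Mval hmeas hindep hmean k i j i' j']
      ring
    simp only [hM, Finset.sum_add_distrib]
    have hC1 : ∑ i, ∑ i', ∑ j, ∑ j', (u1 i * u2 j * (u1 i' * u2 j')) *
          ((if i = j then (1:ℝ) else 0) * (if i' = j' then 1 else 0) *
            ((∫ ω, (E ω k i)^2 ∂P) * ∫ ω, (E ω k i')^2 ∂P))
        = (∑ i, u1 i * u2 i * ∫ ω, (E ω k i)^2 ∂P) *
            (∑ i, u1 i * u2 i * ∫ ω, (E ω k i)^2 ∂P) := by
      have hterm : ∀ i i' j j' : Fin n, (u1 i * u2 j * (u1 i' * u2 j')) *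
            ((if i = j then (1:ℝ) else 0) * (if i' = j' then 1 else 0) *
              ((∫ ω, (E ω k i)^2 ∂P) * ∫ ω, (E ω k i')^2 ∂P))
          = (if i' = j' then (if i = j then (u1 i * u2 j * (u1 i' * u2 j')) *
              ((∫ ω, (E ω k i)^2 ∂P) * ∫ ω, (E ω k i')^2 ∂P) else 0) else 0) := by
        intro i i' j j'
        by_cases h1 : i = j <;> by_cases h2 : i' = j' <;> simp [h1, h2]
      simp only [hterm, Finset.sum_ite_eq, Finset.mem_univ, if_true]
      rw [Finset.sum_mul_sum]
      exact Finset.sum_congr rfl fun i _ => Finset.sum_congr rfl fun i' _ => by ring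
    have hC2 : ∑ i, ∑ i', ∑ j, ∑ j', (u1 i * u2 j * (u1 i' * u2 j')) *
          ((if i = i' then (1:ℝ) else 0) * (if j = j' then 1 else 0) *
            ((∫ ω, (E ω k i)^2 ∂P) * ∫ ω, (E ω k j)^2 ∂P))
        = (∑ i, (u1 i)^2 * ∫ ω, (E ω k i)^2 ∂P) * (∑ i, (u2 i)^2 * ∫ ω, (E ω k i)^2 ∂P) := by
      rw [Finset.sum_congr rfl (fun i _ => Finset.sum_comm)]
      have hterm : ∀ i j i' j' : Fin n, (u1 i * u2 j * (u1 i' * u2 j')) *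
            ((if i = i' then (1:ℝ) else 0) * (if j = j' then 1 else 0) *
              ((∫ ω, (E ω k i)^2 ∂P) * ∫ ω, (E ω k j)^2 ∂P))
          = (if j = j' then (if i = i' then (u1 i * u2 j * (u1 i' * u2 j')) *
              ((∫ ω, (E ω k i)^2 ∂P) * ∫ ω, (E ω k j)^2 ∂P) else 0) else 0) := by
        intro i j i' j'
        by_cases h1 : i = i' <;> by_cases h2 : j = j' <;> simp [h1, h2]
      simp only [hterm, Finset.sum_ite_eq, Finset.mem_univ, if_true]
      rw [Finset.sum_mul_sum]
      exact Finset.sum_congr rfl fun i _ => Finset.sum_congr rfl fun j _ => by ring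
    have hC3 : ∑ i, ∑ i', ∑ j, ∑ j', (u1 i * u2 j * (u1 i' * u2 j')) *
          ((if i = j' then (1:ℝ) else 0) * (if j = i' then 1 else 0) *
            ((∫ ω, (E ω k i)^2 ∂P) * ∫ ω, (E ω k j)^2 ∂P))
        = (∑ i, u1 i * u2 i * ∫ ω, (E ω k i)^2 ∂P) *
            (∑ i, u1 i * u2 i * ∫ ω, (E ω k i)^2 ∂P) := by
      have hterm : ∀ i i' j j' : Fin n, (u1 i * u2 j * (u1 i' * u2 j')) *
            ((if i = j' then (1:ℝ) else 0) * (if j = i' then 1 else 0) *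
              ((∫ ω, (E ω k i)^2 ∂P) * ∫ ω, (E ω k j)^2 ∂P))
          = (if i = j' then (if j = i' then (u1 i * u2 j * (u1 i' * u2 j')) *
              ((∫ ω, (E ω k i)^2 ∂P) * ∫ ω, (E ω k j)^2 ∂P) else 0) else 0) := by
        intro i i' j j'
        by_cases h1 : i = j' <;> by_cases h2 : j = i' <;> simp [h1, h2]
      simp only [hterm, Finset.sum_ite_eq, Finset.sum_ite_eq', Finset.mem_univ, if_true]
      rw [Finset.sum_mul_sum]
      exact Finset.sum_congr rfl fun i _ => Finset.sum_congr rfl fun i' _ => by ring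
    have hC4 : ∑ i, ∑ i', ∑ j, ∑ j', (u1 i * u2 j * (u1 i' * u2 j')) *
          (if i = j ∧ i = i' ∧ i = j' then
            (∫ ω, (E ω k i)^4 ∂P) - 3 * (∫ ω, (E ω k i)^2 ∂P)^2 else 0)
        = ∑ i, (u1 i)^2 * (u2 i)^2 *
            ((∫ ω, (E ω k i)^4 ∂P) - 3 * (∫ ω, (E ω k i)^2 ∂P)^2) := by
      have hterm : ∀ i i' j j' : Fin n, (u1 i * u2 j * (u1 i' * u2 j')) *
            (if i = j ∧ i = i' ∧ i = j' then
              (∫ ω, (E ω k i)^4 ∂P) - 3 * (∫ ω, (E ω k i)^2 ∂P)^2 else 0)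
          = (if i = j' then (if i = j then (if i = i' then (u1 i * u2 j * (u1 i' * u2 j')) *
              ((∫ ω, (E ω k i)^4 ∂P) - 3 * (∫ ω, (E ω k i)^2 ∂P)^2) else 0) else 0) else 0) := by
        intro i i' j j'
        by_cases h1 : i = j
        · by_cases h2 : i = i'
          · by_cases h3 : i = j'
            · rw [if_pos (⟨h1, h2, h3⟩ : i = j ∧ i = i' ∧ i = j'), if_pos h3, if_pos h1,
                if_pos h2]
            · rw [if_neg (by tauto : ¬(i = j ∧ i = i' ∧ i = j')), if_neg h3, mul_zero]
          · by_cases h3 : i = j'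
            · rw [if_neg (by tauto : ¬(i = j ∧ i = i' ∧ i = j')), if_pos h3, if_pos h1,
                if_neg h2, mul_zero]
            · rw [if_neg (by tauto : ¬(i = j ∧ i = i' ∧ i = j')), if_neg h3, mul_zero]
        · by_cases h3 : i = j'
          · rw [if_neg (by tauto : ¬(i = j ∧ i = i' ∧ i = j')), if_pos h3, if_neg h1, mul_zero]
          · rw [if_neg (by tauto : ¬(i = j ∧ i = i' ∧ i = j')), if_neg h3, mul_zero]
      simp only [hterm, Finset.sum_ite_eq, Finset.mem_univ, if_true]
      exact Finset.sum_congr rfl fun i _ => by ring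
    rw [hC1, hC2, hC3, hC4]
    ring
  -- Cauchy–Schwarz bounds for the diagonal terms
  have hQsq : ∀ k, (∑ i, u1 i * u2 i * ∫ ω, (E ω k i)^2 ∂P)^2
      ≤ ∑ i, (u1 i)^2 * ∫ ω, (E ω k i)^4 ∂P := by
    intro k
    have h1 := Finset.sum_mul_sq_le_sq_mul_sq Finset.univ
      (fun i => u1 i * ∫ ω, (E ω k i)^2 ∂P) u2
    have e1 : ∑ i, (u1 i * ∫ ω, (E ω k i)^2 ∂P) * u2 i
        = ∑ i, u1 i * u2 i * ∫ ω, (E ω k i)^2 ∂P :=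
      Finset.sum_congr rfl fun i _ => by ring
    have e2 : ∑ i, (u1 i * ∫ ω, (E ω k i)^2 ∂P)^2 ≤ ∑ i, (u1 i)^2 * ∫ ω, (E ω k i)^4 ∂P :=
      Finset.sum_le_sum fun i _ => by
        have := hvar k i
        have h2 : (u1 i * ∫ ω, (E ω k i)^2 ∂P)^2
            = (u1 i)^2 * (∫ ω, (E ω k i)^2 ∂P)^2 := by ring
        rw [h2]
        exact mul_le_mul_of_nonneg_left this (sq_nonneg _)
    rw [e1] at h1
    calc (∑ i, u1 i * u2 i * ∫ ω, (E ω k i)^2 ∂P)^2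
        ≤ (∑ i, (u1 i * ∫ ω, (E ω k i)^2 ∂P)^2) * (∑ i, (u2 i)^2) := h1
      _ = ∑ i, (u1 i * ∫ ω, (E ω k i)^2 ∂P)^2 := by rw [hu2sq, mul_one]
      _ ≤ _ := e2
  have hRsq : ∀ k, (∑ i, (u1 i)^2 * ∫ ω, (E ω k i)^2 ∂P)^2
      ≤ ∑ i, (u1 i)^2 * ∫ ω, (E ω k i)^4 ∂P := by
    intro k
    have h1 := Finset.sum_mul_sq_le_sq_mul_sq Finset.univ
      (fun i => u1 i * ∫ ω, (E ω k i)^2 ∂P) u1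
    have e1 : ∑ i, (u1 i * ∫ ω, (E ω k i)^2 ∂P) * u1 i
        = ∑ i, (u1 i)^2 * ∫ ω, (E ω k i)^2 ∂P :=
      Finset.sum_congr rfl fun i _ => by ring
    have e2 : ∑ i, (u1 i * ∫ ω, (E ω k i)^2 ∂P)^2 ≤ ∑ i, (u1 i)^2 * ∫ ω, (E ω k i)^4 ∂P :=
      Finset.sum_le_sum fun i _ => by
        have := hvar k i
        have h2 : (u1 i * ∫ ω, (E ω k i)^2 ∂P)^2
            = (u1 i)^2 * (∫ ω, (E ω k i)^2 ∂P)^2 := by ring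
        rw [h2]
        exact mul_le_mul_of_nonneg_left this (sq_nonneg _)
    rw [e1] at h1
    calc (∑ i, (u1 i)^2 * ∫ ω, (E ω k i)^2 ∂P)^2
        ≤ (∑ i, (u1 i * ∫ ω, (E ω k i)^2 ∂P)^2) * (∑ i, (u1 i)^2) := h1
      _ = ∑ i, (u1 i * ∫ ω, (E ω k i)^2 ∂P)^2 := by rw [hu1sq, mul_one]
      _ ≤ _ := e2
  have hTsq : ∀ k, (∑ i, (u2 i)^2 * ∫ ω, (E ω k i)^2 ∂P)^2
      ≤ ∑ i, (u2 i)^2 * ∫ ω, (E ω k i)^4 ∂P := by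
    intro k
    have h1 := Finset.sum_mul_sq_le_sq_mul_sq Finset.univ
      (fun i => u2 i * ∫ ω, (E ω k i)^2 ∂P) u2
    have e1 : ∑ i, (u2 i * ∫ ω, (E ω k i)^2 ∂P) * u2 i
        = ∑ i, (u2 i)^2 * ∫ ω, (E ω k i)^2 ∂P :=
      Finset.sum_congr rfl fun i _ => by ring
    have e2 : ∑ i, (u2 i * ∫ ω, (E ω k i)^2 ∂P)^2 ≤ ∑ i, (u2 i)^2 * ∫ ω, (E ω k i)^4 ∂P :=
      Finset.sum_le_sum fun i _ => by
        have := hvar k i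
        have h2 : (u2 i * ∫ ω, (E ω k i)^2 ∂P)^2
            = (u2 i)^2 * (∫ ω, (E ω k i)^2 ∂P)^2 := by ring
        rw [h2]
        exact mul_le_mul_of_nonneg_left this (sq_nonneg _)
    rw [e1] at h1
    calc (∑ i, (u2 i)^2 * ∫ ω, (E ω k i)^2 ∂P)^2
        ≤ (∑ i, (u2 i * ∫ ω, (E ω k i)^2 ∂P)^2) * (∑ i, (u2 i)^2) := h1
      _ = ∑ i, (u2 i * ∫ ω, (E ω k i)^2 ∂P)^2 := by rw [hu2sq, mul_one]
      _ ≤ _ := e2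
  have hWb : ∀ k, ∑ i, (u1 i)^2 * (u2 i)^2 *
        ((∫ ω, (E ω k i)^4 ∂P) - 3 * (∫ ω, (E ω k i)^2 ∂P)^2)
      ≤ ∑ i, (u1 i)^2 * ∫ ω, (E ω k i)^4 ∂P := by
    intro k
    refine Finset.sum_le_sum fun i _ => ?_
    have h1 := hκnn k i
    have h2 := hu2le i
    have h3 := sq_nonneg (∫ ω, (E ω k i)^2 ∂P)
    have h4 := sq_nonneg (u1 i)
    have h5 := sq_nonneg (u2 i)
    nlinarith [mul_nonneg h4 h1, mul_nonneg (mul_nonneg h4 h5) h3]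
  -- per-row diagonal bound
  have hDk : ∀ k, ∫ ω, X k ω * X k ω ∂P ≤
      (7/2) * (∑ i, (u1 i)^2 * ∫ ω, (E ω k i)^4 ∂P)
      + (1/2) * (∑ i, (u2 i)^2 * ∫ ω, (E ω k i)^4 ∂P) := by
    intro k
    rw [hdiag k]
    have h1 := hQsq k
    have h2 := hRsq k
    have h3 := hTsq k
    have h4 := hWb k
    nlinarith [sq_nonneg ((∑ i, (u1 i)^2 * ∫ ω, (E ω k i)^2 ∂P) -
      (∑ i, (u2 i)^2 * ∫ ω, (E ω k i)^2 ∂P))]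
  -- summing the diagonal bound
  have hcol1 : ∑ i, (u1 i)^2 * (∑ k, ∫ ω, (E ω k i)^4 ∂P) ≤ n * m4 := by
    calc ∑ i, (u1 i)^2 * (∑ k, ∫ ω, (E ω k i)^4 ∂P)
        ≤ ∑ i, (u1 i)^2 * (n * m4) :=
          Finset.sum_le_sum fun i _ => mul_le_mul_of_nonneg_left (hcol i) (sq_nonneg _)
      _ = (∑ i, (u1 i)^2) * (n * m4) := (Finset.sum_mul _ _ _).symm
      _ = n * m4 := by rw [hu1sq, one_mul]
  have hcol2 : ∑ i, (u2 i)^2 * (∑ k, ∫ ω, (E ω k i)^4 ∂P) ≤ n * m4 := by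
    calc ∑ i, (u2 i)^2 * (∑ k, ∫ ω, (E ω k i)^4 ∂P)
        ≤ ∑ i, (u2 i)^2 * (n * m4) :=
          Finset.sum_le_sum fun i _ => mul_le_mul_of_nonneg_left (hcol i) (sq_nonneg _)
      _ = (∑ i, (u2 i)^2) * (n * m4) := (Finset.sum_mul _ _ _).symm
      _ = n * m4 := by rw [hu2sq, one_mul]
  have hDbound : ∑ k, ∫ ω, X k ω * X k ω ∂P ≤ 4 * (n * m4) := by
    have hstep : ∑ k, ∫ ω, X k ω * X k ω ∂P ≤
        ∑ k, ((7/2) * (∑ i, (u1 i)^2 * ∫ ω, (E ω k i)^4 ∂P)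
          + (1/2) * (∑ i, (u2 i)^2 * ∫ ω, (E ω k i)^4 ∂P)) :=
      Finset.sum_le_sum fun k _ => hDk k
    have hswap1 : ∑ k, ∑ i, (u1 i)^2 * ∫ ω, (E ω k i)^4 ∂P
        = ∑ i, (u1 i)^2 * (∑ k, ∫ ω, (E ω k i)^4 ∂P) := by
      rw [Finset.sum_comm]
      exact Finset.sum_congr rfl fun i _ => (Finset.mul_sum _ _ _).symm
    have hswap2 : ∑ k, ∑ i, (u2 i)^2 * ∫ ω, (E ω k i)^4 ∂P
        = ∑ i, (u2 i)^2 * (∑ k, ∫ ω, (E ω k i)^4 ∂P) := by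
      rw [Finset.sum_comm]
      exact Finset.sum_congr rfl fun i _ => (Finset.mul_sum _ _ _).symm
    have hdist : ∑ k, ((7/2) * (∑ i, (u1 i)^2 * ∫ ω, (E ω k i)^4 ∂P)
          + (1/2) * (∑ i, (u2 i)^2 * ∫ ω, (E ω k i)^4 ∂P))
        = (7/2) * (∑ i, (u1 i)^2 * (∑ k, ∫ ω, (E ω k i)^4 ∂P))
          + (1/2) * (∑ i, (u2 i)^2 * (∑ k, ∫ ω, (E ω k i)^4 ∂P)) := by
      rw [Finset.sum_add_distrib, ← Finset.mul_sum, ← Finset.mul_sum, hswap1, hswap2]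
    rw [hdist] at hstep
    have := mul_le_mul_of_nonneg_left hcol1 (by norm_num : (0:ℝ) ≤ 7/2)
    have := mul_le_mul_of_nonneg_left hcol2 (by norm_num : (0:ℝ) ≤ 1/2)
    linarith
  -- splitting diagonal and off-diagonal
  have hsplit : ∑ k, ∑ k', ∫ ω, X k ω * X k' ω ∂P
      = (∑ k, ∑ i, u1 i * u2 i * ∫ ω, (E ω k i)^2 ∂P)^2
        + ∑ k, ((∫ ω, X k ω * X k ω ∂P)
            - (∑ i, u1 i * u2 i * ∫ ω, (E ω k i)^2 ∂P)^2) := by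
    have hterm : ∀ k k' : Fin n, ∫ ω, X k ω * X k' ω ∂P
        = (∑ i, u1 i * u2 i * ∫ ω, (E ω k i)^2 ∂P) *
            (∑ i, u1 i * u2 i * ∫ ω, (E ω k' i)^2 ∂P)
          + (if k = k' then (∫ ω, X k ω * X k ω ∂P)
              - (∑ i, u1 i * u2 i * ∫ ω, (E ω k i)^2 ∂P)^2 else 0) := by
      intro k k'
      by_cases h : k = k'
      · subst h
        rw [if_pos rfl]
        ring
      · rw [if_neg h, add_zero,
          (hIndepX k k' h).integral_fun_mul_eq_mul_integral (hmeasX k).aestronglyMeasurable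
            (hmeasX k').aestronglyMeasurable, hQ k, hQ k']
    calc ∑ k, ∑ k', ∫ ω, X k ω * X k' ω ∂P
        = ∑ k, ∑ k', ((∑ i, u1 i * u2 i * ∫ ω, (E ω k i)^2 ∂P) *
            (∑ i, u1 i * u2 i * ∫ ω, (E ω k' i)^2 ∂P)
          + (if k = k' then (∫ ω, X k ω * X k ω ∂P)
              - (∑ i, u1 i * u2 i * ∫ ω, (E ω k i)^2 ∂P)^2 else 0)) := by
          exact Finset.sum_congr rfl fun k _ => Finset.sum_congr rfl fun k' _ => hterm k k'
      _ = (∑ k, ∑ i, u1 i * u2 i * ∫ ω, (E ω k i)^2 ∂P)^2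
          + ∑ k, ((∫ ω, X k ω * X k ω ∂P)
              - (∑ i, u1 i * u2 i * ∫ ω, (E ω k i)^2 ∂P)^2) := by
          rw [Finset.sum_congr rfl (fun k (_ : k ∈ Finset.univ) => Finset.sum_add_distrib),
            Finset.sum_add_distrib, pow_two, Finset.sum_mul_sum]
          congr 1
          exact Finset.sum_congr rfl fun k _ => by
            simp [Finset.sum_ite_eq, Finset.mem_univ]
  have part2 : ∫ ω, ((E ω *ᵥ u1) ⬝ᵥ (E ω *ᵥ u2)) ^ 2 ∂P ≤
      5 * n * m4 + (∫ ω, (E ω *ᵥ u1) ⬝ᵥ (E ω *ᵥ u2) ∂P) ^ 2 := by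
    rw [hS2, hsplit, ← hIS]
    have h1 : ∑ k, ((∫ ω, X k ω * X k ω ∂P)
          - (∑ i, u1 i * u2 i * ∫ ω, (E ω k i)^2 ∂P)^2)
        ≤ ∑ k, ∫ ω, X k ω * X k ω ∂P :=
      Finset.sum_le_sum fun k _ => by nlinarith [sq_nonneg (∑ i, u1 i * u2 i * ∫ ω, (E ω k i)^2 ∂P)]
    have h2 : (0:ℝ) ≤ n * m4 := mul_nonneg (le_of_lt hgt0) hm4nn
    have h3 : 5 * (n:ℝ) * m4 = 5 * ((n:ℝ) * m4) := by ring
    linarith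
  refine ⟨part1, part2, ?_⟩
  intro hreg
  have hzero : ∫ ω, (E ω *ᵥ u1) ⬝ᵥ (E ω *ᵥ u2) ∂P = 0 := by
    rw [part1]
    have hC : ∀ i : Fin n, (∑ l, ∫ ω, (E ω l i) ^ 2 ∂P)
        = ∑ l, ∫ ω, (E ω l ⟨0, hn⟩) ^ 2 ∂P := fun i => hreg i ⟨0, hn⟩
    calc ∑ i, u1 i * u2 i * (∑ l, ∫ ω, (E ω l i) ^ 2 ∂P)
        = ∑ i, u1 i * u2 i * (∑ l, ∫ ω, (E ω l ⟨0, hn⟩) ^ 2 ∂P) :=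
          Finset.sum_congr rfl fun i _ => by rw [hC i]
      _ = (∑ i, u1 i * u2 i) * (∑ l, ∫ ω, (E ω l ⟨0, hn⟩) ^ 2 ∂P) :=
          (Finset.sum_mul _ _ _).symm
      _ = 0 := by rw [show (∑ i, u1 i * u2 i) = 0 from hu12, zero_mul]
  refine ⟨hzero, ?_⟩
  have := part2
  rw [hzero] at this
  simpa using this
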